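/- Let C be a cartesian closed category with finite colimits and a terminal object *. Given maps x_0 → x_1, y_0 → y_1, z_0 → z_1 and an 'L-equivalence' x_1/x_0 → y_1/y_0 (an isomorphism of cofibers, where a/b denotes the cofiber b → a → a/b with * glued in), there is a natural isomorphism ((x_1 × z_1) / (x_0 × z_1 ∪_{x_0 × z_0} x_1 × z_0)) ≅ ((x_1 × z_1)/(x_0 × z_1)) / ((x_1 × z_0)/(x_0 × z_0)); consequently the pushout product with a fixed arrow z_0 → z_1 preserves L-equivalences. -/

import Mathlib

open CategoryTheory CategoryTheory.Limits
open MonoidalCategory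

universe u v

namespace ParamOperads

variable {C : Type u} [Category.{v} C]

section
variable [HasTerminal C] [HasFiniteColimits C]

/-- The cofiber `a/b` of `f : b ⟶ a`: the pushout of `* ⟵ b ⟶ a`. -/
noncomputable def cof {b a : C} (f : b ⟶ a) : C :=
  pushout f (terminal.from b)

/-- Functoriality of cofibers: a commuting square induces a map of cofibers. -/
noncomputable def cofMap {b a b' a' : C} (f : b ⟶ a) (f' : b' ⟶ a')
    (u : b ⟶ b') (v : a ⟶ a') (h : f ≫ v = u ≫ f') : cof f ⟶ cof f' :=
  pushout.map f (terminal.from b) f' (terminal.from b') v (𝟙 (⊤_ C)) u h (by simp)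

variable [HasFiniteProducts C]

/-- The pushout product of `f : x₀ ⟶ x₁` and `g : z₀ ⟶ z₁`:
`x₀ × z₁ ∪_{x₀ × z₀} x₁ × z₀ ⟶ x₁ × z₁`. -/
noncomputable def pp {x₀ x₁ z₀ z₁ : C} (f : x₀ ⟶ x₁) (g : z₀ ⟶ z₁) :
    pushout (prod.map (𝟙 x₀) g) (prod.map f (𝟙 z₀)) ⟶ x₁ ⨯ z₁ :=
  pushout.desc (prod.map f (𝟙 z₁)) (prod.map (𝟙 x₁) g)
    (by simp [prod.map_map])

end

section Aux
variable [HasTerminal C] [HasFiniteColimits C]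

/-- A map between two pushouts over isomorphic spans is an isomorphism. -/
lemma isIso_of_isPushout_of_iso
    {Z X Y P Z' X' Y' P' : C}
    {f : Z ⟶ X} {g : Z ⟶ Y} {inl : X ⟶ P} {inr : Y ⟶ P}
    {f' : Z' ⟶ X'} {g' : Z' ⟶ Y'} {inl' : X' ⟶ P'} {inr' : Y' ⟶ P'}
    (s : IsPushout f g inl inr) (s' : IsPushout f' g' inl' inr')
    (ez : Z ⟶ Z') (ex : X ⟶ X') (ey : Y ⟶ Y')
    [IsIso ez] [IsIso ex] [IsIso ey] (φ : P ⟶ P')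
    (c1 : f ≫ ex = ez ≫ f') (c2 : g ≫ ey = ez ≫ g')
    (d1 : inl ≫ φ = ex ≫ inl') (d2 : inr ≫ φ = ey ≫ inr') : IsIso φ := by
  have e1 : f' ≫ inv ex = inv ez ≫ f := by
    rw [IsIso.eq_inv_comp, ← Category.assoc, ← c1, Category.assoc, IsIso.hom_inv_id,
      Category.comp_id]
  have e2 : g' ≫ inv ey = inv ez ≫ g := by
    rw [IsIso.eq_inv_comp, ← Category.assoc, ← c2, Category.assoc, IsIso.hom_inv_id,
      Category.comp_id]
  have hw : f' ≫ inv ex ≫ inl = g' ≫ inv ey ≫ inr := by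
    rw [← Category.assoc, e1, ← Category.assoc, e2, Category.assoc, Category.assoc, s.w]
  refine ⟨s'.desc (inv ex ≫ inl) (inv ey ≫ inr) hw, ?_, ?_⟩
  · apply s.hom_ext
    · rw [Category.comp_id, ← Category.assoc, d1, Category.assoc, s'.inl_desc,
        IsIso.hom_inv_id_assoc]
    · rw [Category.comp_id, ← Category.assoc, d2, Category.assoc, s'.inr_desc,
        IsIso.hom_inv_id_assoc]
  · apply s'.hom_ext
    · rw [Category.comp_id, ← Category.assoc, s'.inl_desc, Category.assoc, d1,
        IsIso.inv_hom_id_assoc]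
    · rw [Category.comp_id, ← Category.assoc, s'.inr_desc, Category.assoc, d2,
        IsIso.inv_hom_id_assoc]

section KeyLemma

variable {A B D E : C} (i : A ⟶ B) (j : A ⟶ D) (m : B ⟶ E) (n : D ⟶ E)

/-- The comparison map `E/B ⟶ cof q` for `q : B ∪_A D ⟶ E`. -/
noncomputable def chi (q : pushout i j ⟶ E) (hql : pushout.inl i j ≫ q = m) :
    pushout m (terminal.from B) ⟶ pushout q (terminal.from (pushout i j)) :=
  pushout.desc (pushout.inl q (terminal.from (pushout i j)))
    (pushout.inr q (terminal.from (pushout i j)))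
    (by rw [← hql, Category.assoc, pushout.condition, ← Category.assoc, terminal.comp_from])

/-- Key structural lemma: for `q : B ∪_A D ⟶ E`, the cofiber of `q` is the pushout of
`* ⟵ D/A ⟶ E/B`. -/
lemma key_isPushout (hc' : j ≫ n = i ≫ m)
    (q : pushout i j ⟶ E) (hql : pushout.inl i j ≫ q = m) (hqr : pushout.inr i j ≫ q = n) :
    IsPushout (cofMap j m i n hc') (terminal.from (cof j)) (chi i j m q hql)
      (pushout.inr q (terminal.from (pushout i j))) := by
  unfold cof
  have T1 : IsPushout i j (pushout.inl i j) (pushout.inr i j) := .of_hasPushout i j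
  have T5 : IsPushout (pushout.inl i j) (terminal.from B)
      (pushout.inl (pushout.inl i j) (terminal.from B))
      (pushout.inr (pushout.inl i j) (terminal.from B)) := .of_hasPushout _ _
  have U : IsPushout j (terminal.from A)
      (pushout.inr i j ≫ pushout.inl (pushout.inl i j) (terminal.from B))
      (pushout.inr (pushout.inl i j) (terminal.from B)) := by
    have h := T1.flip.paste_vert T5
    rwa [terminal.comp_from] at h
  have hσw : pushout.inl i j ≫ q ≫ pushout.inl m (terminal.from B) =
      terminal.from B ≫ pushout.inr m (terminal.from B) := by
    rw [← Category.assoc, hql]; exact pushout.condition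
  set σ : pushout (pushout.inl i j) (terminal.from B) ⟶ pushout m (terminal.from B) :=
    pushout.desc (q ≫ pushout.inl m (terminal.from B)) (pushout.inr m (terminal.from B)) hσw
    with hσ
  have s6 : IsPushout (pushout.inl i j ≫ q) (terminal.from B) (pushout.inl m (terminal.from B))
      (pushout.inr (pushout.inl i j) (terminal.from B) ≫ σ) := by
    rw [hql, hσ, pushout.inr_desc]
    exact .of_hasPushout _ _
  have p6 : q ≫ pushout.inl m (terminal.from B) =
      pushout.inl (pushout.inl i j) (terminal.from B) ≫ σ := by
    rw [hσ, pushout.inl_desc]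
  have T6 := IsPushout.of_left s6 p6 T5
  have s7 : IsPushout q
      (pushout.inl (pushout.inl i j) (terminal.from B) ≫
        terminal.from (pushout (pushout.inl i j) (terminal.from B)))
      (pushout.inl m (terminal.from B) ≫ chi i j m q hql)
      (pushout.inr q (terminal.from (pushout i j))) := by
    rw [terminal.comp_from]
    have h : pushout.inl m (terminal.from B) ≫ chi i j m q hql =
        pushout.inl q (terminal.from (pushout i j)) := by unfold chi; rw [pushout.inl_desc]
    rw [h]
    exact .of_hasPushout _ _
  have p7 : σ ≫ chi i j m q hql =
      terminal.from (pushout (pushout.inl i j) (terminal.from B)) ≫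
        pushout.inr q (terminal.from (pushout i j)) := by
    apply pushout.hom_ext
    · rw [hσ]
      simp only [pushout.inl_desc_assoc, Category.assoc]
      simp only [chi, pushout.inl_desc]
      rw [← Category.assoc, terminal.comp_from]
      exact pushout.condition
    · rw [hσ]
      simp only [pushout.inr_desc_assoc]
      simp only [chi, pushout.inr_desc]
      rw [← Category.assoc, terminal.comp_from,
        show terminal.from (⊤_ C) = 𝟙 (⊤_ C) from terminal.hom_ext _ _, Category.id_comp]
  have T7 := IsPushout.of_top s7 p7 T6
  have hψ : U.isoPushout.inv ≫ σ = cofMap j m i n hc' := by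
    apply pushout.hom_ext (f := j) (g := terminal.from A)
    · rw [← Category.assoc, U.inl_isoPushout_inv]
      rw [hσ]
      simp only [Category.assoc, pushout.inl_desc]
      rw [← Category.assoc, hqr]
      unfold cofMap
      rw [pushout.inl_desc]
    · rw [← Category.assoc, U.inr_isoPushout_inv]
      rw [hσ]
      unfold cofMap
      rw [pushout.inr_desc, pushout.inr_desc, Category.id_comp]
  exact T7.of_iso U.isoPushout (Iso.refl _) (Iso.refl _) (Iso.refl _)
    (by rw [← hψ, Iso.hom_inv_id_assoc, Iso.refl_hom, Category.comp_id])
    (by apply terminal.hom_ext)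
    (by simp [pushout.inl_desc, pushout.inr_desc, pushout.inl_desc_assoc, pushout.inr_desc_assoc]) (by simp [pushout.inl_desc, pushout.inr_desc, pushout.inl_desc_assoc, pushout.inr_desc_assoc])

end KeyLemma

section ProdLemma

variable [HasFiniteProducts C] [CartesianMonoidalCategory C] [MonoidalClosed C]

/-- The functor `X ↦ X ⨯ z` is isomorphic to `tensorLeft z`. -/
noncomputable def tensorProdIso (z : C) :
    MonoidalCategory.tensorLeft z ≅ prod.functor.flip.obj z :=
  NatIso.ofComponents
    (fun X =>
      { hom := prod.lift (CartesianMonoidalCategory.snd z X) (CartesianMonoidalCategory.fst z X)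
        inv := CartesianMonoidalCategory.lift prod.snd prod.fst
        hom_inv_id := by
          change prod.lift (CartesianMonoidalCategory.snd z X) (CartesianMonoidalCategory.fst z X) ≫
            CartesianMonoidalCategory.lift prod.snd prod.fst = 𝟙 (z ⊗ X)
          apply CartesianMonoidalCategory.hom_ext <;>
            simp [CartesianMonoidalCategory.lift_fst, CartesianMonoidalCategory.lift_snd, prod.lift_fst, prod.lift_snd, prod.lift_fst_assoc, prod.lift_snd_assoc]
        inv_hom_id := by
          change CartesianMonoidalCategory.lift prod.snd prod.fst ≫
            prod.lift (CartesianMonoidalCategory.snd z X) (CartesianMonoidalCategory.fst z X) = 𝟙 (X ⨯ z)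
          apply Limits.prod.hom_ext <;>
            simp [CartesianMonoidalCategory.lift_fst, CartesianMonoidalCategory.lift_snd, prod.lift_fst, prod.lift_snd, prod.lift_fst_assoc, prod.lift_snd_assoc] })
    (fun {X Y} k => by
      change z ◁ k ≫ prod.lift (CartesianMonoidalCategory.snd z Y) (CartesianMonoidalCategory.fst z Y) =
        prod.lift (CartesianMonoidalCategory.snd z X) (CartesianMonoidalCategory.fst z X) ≫ prod.map k (𝟙 z)
      apply Limits.prod.hom_ext <;>
        simp [CartesianMonoidalCategory.whiskerLeft_fst, CartesianMonoidalCategory.whiskerLeft_snd,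
          CartesianMonoidalCategory.lift_fst, CartesianMonoidalCategory.lift_snd, prod.lift_fst, prod.lift_snd, prod.lift_fst_assoc, prod.lift_snd_assoc])

/-- Taking the product with a fixed object `z` preserves L-equivalences. -/
lemma isIso_cofMap_prod {x₀ x₁ y₀ y₁ : C} (f : x₀ ⟶ x₁) (f' : y₀ ⟶ y₁)
    (u₀ : x₀ ⟶ y₀) (u₁ : x₁ ⟶ y₁) (hsq : f ≫ u₁ = u₀ ≫ f')
    (hLE : IsIso (cofMap f f' u₀ u₁ hsq)) (z : C)
    (h2 : prod.map f (𝟙 z) ≫ prod.map u₁ (𝟙 z) = prod.map u₀ (𝟙 z) ≫ prod.map f' (𝟙 z)) :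
    IsIso (cofMap (prod.map f (𝟙 z)) (prod.map f' (𝟙 z)) (prod.map u₀ (𝟙 z))
      (prod.map u₁ (𝟙 z)) h2) := by
  haveI := hLE
  letI : PreservesColimits (prod.functor.flip.obj z) :=
    preservesColimits_of_natIso (tensorProdIso z)
  have SF : IsPushout (prod.map f (𝟙 z)) (prod.map (terminal.from x₀) (𝟙 z))
      (prod.map (pushout.inl f (terminal.from x₀)) (𝟙 z))
      (prod.map (pushout.inr f (terminal.from x₀)) (𝟙 z)) := by
    exact (IsPushout.of_hasPushout f (terminal.from x₀)).map (prod.functor.flip.obj z)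
  have SF' : IsPushout (prod.map f' (𝟙 z)) (prod.map (terminal.from y₀) (𝟙 z))
      (prod.map (pushout.inl f' (terminal.from y₀)) (𝟙 z))
      (prod.map (pushout.inr f' (terminal.from y₀)) (𝟙 z)) := by
    exact (IsPushout.of_hasPushout f' (terminal.from y₀)).map (prod.functor.flip.obj z)
  have s8 : IsPushout (prod.map f (𝟙 z))
      (prod.map (terminal.from x₀) (𝟙 z) ≫ terminal.from ((⊤_ C) ⨯ z))
      (pushout.inl (prod.map f (𝟙 z)) (terminal.from (x₀ ⨯ z)))
      (pushout.inr (prod.map f (𝟙 z)) (terminal.from (x₀ ⨯ z))) := by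
    rw [terminal.comp_from]
    exact .of_hasPushout _ _
  have s8' : IsPushout (prod.map f' (𝟙 z))
      (prod.map (terminal.from y₀) (𝟙 z) ≫ terminal.from ((⊤_ C) ⨯ z))
      (pushout.inl (prod.map f' (𝟙 z)) (terminal.from (y₀ ⨯ z)))
      (pushout.inr (prod.map f' (𝟙 z)) (terminal.from (y₀ ⨯ z))) := by
    rw [terminal.comp_from]
    exact .of_hasPushout _ _
  have T8 := IsPushout.of_top' s8 SF
  have T8' := IsPushout.of_top' s8' SF'
  have hγ : IsIso (prod.map (cofMap f f' u₀ u₁ hsq) (𝟙 z)) := by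
    have h : IsIso ((prod.functor.flip.obj z).map (cofMap f f' u₀ u₁ hsq)) := inferInstance
    exact h
  haveI : IsIso (X := pushout f (terminal.from x₀) ⨯ z) (Y := pushout f' (terminal.from y₀) ⨯ z)
      (prod.map (cofMap f f' u₀ u₁ hsq) (𝟙 z)) := hγ
  have hstep : prod.map (pushout.inl f (terminal.from x₀)) (𝟙 z) ≫
      prod.map (cofMap f f' u₀ u₁ hsq) (𝟙 z) =
      prod.map u₁ (𝟙 z) ≫ prod.map (pushout.inl f' (terminal.from y₀)) (𝟙 z) := by
    unfold cof
    simp [prod.map_map, cofMap, pushout.inl_desc, pushout.inr_desc, pushout.inl_desc_assoc, pushout.inr_desc_assoc]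
  have hstep2 : prod.map (pushout.inr f (terminal.from x₀)) (𝟙 z) ≫
      prod.map (cofMap f f' u₀ u₁ hsq) (𝟙 z) =
      prod.map (pushout.inr f' (terminal.from y₀)) (𝟙 z) := by
    unfold cof
    simp [prod.map_map, cofMap, pushout.inl_desc, pushout.inr_desc, pushout.inl_desc_assoc, pushout.inr_desc_assoc]
  refine isIso_of_isPushout_of_iso T8 T8' (𝟙 _) (prod.map (cofMap f f' u₀ u₁ hsq) (𝟙 z))
    (𝟙 (⊤_ C)) (cofMap (prod.map f (𝟙 z)) (prod.map f' (𝟙 z)) (prod.map u₀ (𝟙 z))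
      (prod.map u₁ (𝟙 z)) h2) ?_ ?_ ?_ ?_
  · unfold cofMap cof at hstep2
    unfold cofMap
    rw [hstep2, Category.id_comp]
  · simp
  · unfold cofMap cof at hstep hstep2
    unfold cofMap
    apply SF.hom_ext
    · rw [SF.inl_desc_assoc, ← Category.assoc, hstep, Category.assoc, SF'.inl_desc]
      simp [cofMap, pushout.inl_desc, pushout.inr_desc, pushout.inl_desc_assoc, pushout.inr_desc_assoc]
    · rw [SF.inr_desc_assoc, ← Category.assoc, hstep2, SF'.inr_desc]
      simp [cofMap, pushout.inl_desc, pushout.inr_desc, pushout.inl_desc_assoc, pushout.inr_desc_assoc]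
  · unfold cofMap
    simp [cofMap, pushout.inl_desc, pushout.inr_desc, pushout.inl_desc_assoc, pushout.inr_desc_assoc]

end ProdLemma

end Aux

/-- Let `C` be cartesian closed with finite colimits and a
terminal object. Then for `f : x₀ ⟶ x₁` and `g : z₀ ⟶ z₁` there is an isomorphism
`(x₁ × z₁)/(x₀ × z₁ ∪_{x₀ × z₀} x₁ × z₀) ≅ ((x₁ × z₁)/(x₀ × z₁)) / ((x₁ × z₀)/(x₀ × z₀))`,
and consequently the pushout product with a fixed arrow `g : z₀ ⟶ z₁` preserves
L-equivalences (squares inducing an isomorphism on cofibers). -/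
theorem pushout_product_preserves_L_equivalences
    [HasTerminal C] [HasFiniteColimits C] [HasFiniteProducts C] [CartesianMonoidalCategory C] [MonoidalClosed C]
    {x₀ x₁ z₀ z₁ y₀ y₁ : C} (f : x₀ ⟶ x₁) (f' : y₀ ⟶ y₁) (g : z₀ ⟶ z₁)
    -- the L-equivalence `(x₀ → x₁) ⟶ (y₀ → y₁)` :
    (u₀ : x₀ ⟶ y₀) (u₁ : x₁ ⟶ y₁) (hsq : f ≫ u₁ = u₀ ≫ f')
    (hLE : IsIso (cofMap f f' u₀ u₁ hsq))
    -- the induced comparison map on the pushout-product domains :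
    (w : pushout (prod.map (𝟙 x₀) g) (prod.map f (𝟙 z₀)) ⟶
         pushout (prod.map (𝟙 y₀) g) (prod.map f' (𝟙 z₀)))
    (hw₁ : pushout.inl _ _ ≫ w = prod.map u₀ (𝟙 z₁) ≫ pushout.inl _ _)
    (hw₂ : pushout.inr _ _ ≫ w = prod.map u₁ (𝟙 z₀) ≫ pushout.inr _ _)
    (hcomm : pp f g ≫ prod.map u₁ (𝟙 z₁) = w ≫ pp f' g) :
    Nonempty (cof (pp f g) ≅
        cof (cofMap (prod.map f (𝟙 z₀)) (prod.map f (𝟙 z₁))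
          (prod.map (𝟙 x₀) g) (prod.map (𝟙 x₁) g) (by simp [prod.map_map]))) ∧
    IsIso (cofMap (pp f g) (pp f' g) w (prod.map u₁ (𝟙 z₁)) hcomm) := by
  haveI := hLE
  have hc : prod.map (𝟙 x₀) g ≫ prod.map f (𝟙 z₁) = prod.map f (𝟙 z₀) ≫ prod.map (𝟙 x₁) g := by
    simp [prod.map_map]
  have hcy : prod.map (𝟙 y₀) g ≫ prod.map f' (𝟙 z₁) =
      prod.map f' (𝟙 z₀) ≫ prod.map (𝟙 y₁) g := by
    simp [prod.map_map]
  have K := key_isPushout (prod.map (𝟙 x₀) g) (prod.map f (𝟙 z₀)) (prod.map f (𝟙 z₁))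
    (prod.map (𝟙 x₁) g) hc.symm (pp f g) (by simp [pp, pushout.inl_desc, pushout.inr_desc, pushout.inl_desc_assoc, pushout.inr_desc_assoc]) (by simp [pp, pushout.inl_desc, pushout.inr_desc, pushout.inl_desc_assoc, pushout.inr_desc_assoc])
  have K' := key_isPushout (prod.map (𝟙 y₀) g) (prod.map f' (𝟙 z₀)) (prod.map f' (𝟙 z₁))
    (prod.map (𝟙 y₁) g) hcy.symm (pp f' g) (by simp [pp, pushout.inl_desc, pushout.inr_desc, pushout.inl_desc_assoc, pushout.inr_desc_assoc]) (by simp [pp, pushout.inl_desc, pushout.inr_desc, pushout.inl_desc_assoc, pushout.inr_desc_assoc])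
  constructor
  · exact ⟨K.isoPushout⟩
  · have hα := isIso_cofMap_prod f f' u₀ u₁ hsq hLE z₀ (by simp [prod.map_map, hsq])
    have hβ := isIso_cofMap_prod f f' u₀ u₁ hsq hLE z₁ (by simp [prod.map_map, hsq])
    haveI := hα
    haveI := hβ
    have pf0 : prod.map f (𝟙 z₀) ≫ prod.map u₁ (𝟙 z₀) =
        prod.map u₀ (𝟙 z₀) ≫ prod.map f' (𝟙 z₀) := by simp [prod.map_map, hsq]
    have pf1 : prod.map f (𝟙 z₁) ≫ prod.map u₁ (𝟙 z₁) =
        prod.map u₀ (𝟙 z₁) ≫ prod.map f' (𝟙 z₁) := by simp [prod.map_map, hsq]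
    refine isIso_of_isPushout_of_iso K K'
      (cofMap (prod.map f (𝟙 z₀)) (prod.map f' (𝟙 z₀)) (prod.map u₀ (𝟙 z₀))
        (prod.map u₁ (𝟙 z₀)) pf0)
      (cofMap (prod.map f (𝟙 z₁)) (prod.map f' (𝟙 z₁)) (prod.map u₀ (𝟙 z₁))
        (prod.map u₁ (𝟙 z₁)) pf1)
      (𝟙 (⊤_ C))
      (cofMap (pp f g) (pp f' g) w (prod.map u₁ (𝟙 z₁)) hcomm)
      ?_ ?_ ?_ ?_
    · unfold cofMap cof
      apply pushout.hom_ext <;> simp [cofMap, prod.map_map, pushout.inl_desc, pushout.inr_desc, pushout.inl_desc_assoc, pushout.inr_desc_assoc]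
    · simp
    · unfold cofMap cof
      apply pushout.hom_ext <;> simp [chi, cofMap, pushout.inl_desc, pushout.inr_desc, pushout.inl_desc_assoc, pushout.inr_desc_assoc]
    · unfold cofMap
      simp [cofMap, pushout.inl_desc, pushout.inr_desc, pushout.inl_desc_assoc, pushout.inr_desc_assoc]

end ParamOperads
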